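/- Let d ≥ 1, β > 0 and let U = V + g satisfy assumptions (A0) and (A1). Then for every a ∈ ℝ^{2d} and all indices i, j in {1,…,2d}: C₁²·Var_{ν_a}(id) ≤ Cov_{ν_a}( V'(a_i − ·), V'(a_j − ·) ) ≤ C₂²·Var_{ν_a}(id). -/

import Mathlib

open MeasureTheory Real Filter

noncomputable section

/-- Boltzmann weight of the single odd site given the `2d` neighbouring values `a`. -/
def siteWeight (β : ℝ) (d : ℕ) (U : ℝ → ℝ) (a : Fin (2*d) → ℝ) (t : ℝ) : ℝ :=
  Real.exp (-(2*β) * ∑ k, U (a k - t))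

/-- Normalising constant `Z_a`. -/
def Zsite (β : ℝ) (d : ℕ) (U : ℝ → ℝ) (a : Fin (2*d) → ℝ) : ℝ :=
  ∫ t : ℝ, siteWeight β d U a t

/-- Single-site measure `ν_a`. -/
def nuSite (β : ℝ) (d : ℕ) (U : ℝ → ℝ) (a : Fin (2*d) → ℝ) : Measure ℝ :=
  volume.withDensity fun t => ENNReal.ofReal (siteWeight β d U a t / Zsite β d U a)

/-- Coarse-grained potential `F(a) = -log Z_a`. -/
def Fcg (β : ℝ) (d : ℕ) (U : ℝ → ℝ) (a : Fin (2*d) → ℝ) : ℝ :=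
  - Real.log (Zsite β d U a)

/-- Covariance of two functions under a measure on `ℝ`. -/
def covM (ν : Measure ℝ) (f g : ℝ → ℝ) : ℝ :=
  (∫ t, f t * g t ∂ν) - (∫ t, f t ∂ν) * (∫ t, g t ∂ν)

/-- Variance of the identity function under a measure on `ℝ`. -/
def varId (ν : Measure ℝ) : ℝ := covM ν (fun t => t) (fun t => t)

/-- First partial derivative. -/
def pd {n : ℕ} (Φ : (Fin n → ℝ) → ℝ) (i : Fin n) (a : Fin n → ℝ) : ℝ :=
  fderiv ℝ Φ a (Pi.single i 1)

/-- Second partial derivative. -/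
def pd2 {n : ℕ} (Φ : (Fin n → ℝ) → ℝ) (i j : Fin n) (a : Fin n → ℝ) : ℝ :=
  fderiv ℝ (fun x => fderiv ℝ Φ x (Pi.single i 1)) a (Pi.single j 1)

namespace Aux


variable {d : ℕ} {β A B : ℝ} {U : ℝ → ℝ} {a : Fin (2*d) → ℝ}

lemma siteWeight_pos (β d U a t) : 0 < siteWeight β d U a t := Real.exp_pos _

lemma siteWeight_continuous (hU : Continuous U) : Continuous (siteWeight β d U a) := by
  unfold siteWeight
  exact Real.continuous_exp.comp (continuous_const.mul
    (continuous_finset_sum _ fun k _ => hU.comp (continuous_const.sub continuous_id)))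

lemma siteWeight_le (hd : 1 ≤ d) (hβ : 0 < β) (hA : 0 < A)
    (hA0 : ∀ η : ℝ, A * η ^ 2 - B ≤ U η) (t : ℝ) :
    siteWeight β d U a t ≤
      Real.exp (2*β*(2*d)*B) * Real.exp (-(2*β*A) * (a ⟨0, by omega⟩ - t)^2) := by
  rw [← Real.exp_add]
  apply Real.exp_le_exp.2
  have hsum : A * (a ⟨0, by omega⟩ - t)^2 - (2*d) * B ≤ ∑ k, U (a k - t) := by
    have h1 : ∑ k, (A * (a k - t)^2 - B) ≤ ∑ k, U (a k - t) :=
      Finset.sum_le_sum fun k _ => hA0 _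
    have h2 : (a ⟨0, by omega⟩ - t)^2 ≤ ∑ k, (a k - t)^2 :=
      Finset.single_le_sum (f := fun k => (a k - t)^2) (fun k _ => sq_nonneg _)
        (Finset.mem_univ _)
    have h3 : ∑ k, (A * (a k - t)^2 - B) = A * (∑ k, (a k - t)^2) - (2*d) * B := by
      rw [Finset.sum_sub_distrib, ← Finset.mul_sum]
      simp [Finset.card_univ]
    nlinarith [mul_le_mul_of_nonneg_left h2 hA.le]
  nlinarith

lemma integrable_weight_mul (hd : 1 ≤ d) (hβ : 0 < β) (hU : Continuous U) (hA : 0 < A)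
    (hA0 : ∀ η : ℝ, A * η ^ 2 - B ≤ U η) {h : ℝ → ℝ} (hh : Continuous h) {c : ℝ}
    (hbd : ∀ t, |h t| ≤ c * (1 + t^2)) :
    Integrable (fun t => h t * siteWeight β d U a t) := by
  set b : ℝ := 2*β*A with hb
  have hbpos : 0 < b := by positivity
  set a₀ : ℝ := a ⟨0, by omega⟩ with ha₀
  set K : ℝ := Real.exp (2*β*(2*d)*B) with hK
  have hc : 0 ≤ c := by
    have := hbd 0
    have h0 : (0:ℝ) ≤ |h 0| := abs_nonneg _
    nlinarith
  -- integrability of the Gaussian-type bound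
  have hsq : Integrable (fun x : ℝ => x ^ 2 * Real.exp (-b * x^2)) := by
    have h := integrable_rpow_mul_exp_neg_mul_sq hbpos (s := 2) (by norm_num)
    have e : ∀ x : ℝ, x ^ (2:ℝ) = x ^ (2:ℕ) := fun x => by
      rw [show (2:ℝ) = ((2:ℕ):ℝ) by norm_num, Real.rpow_natCast]
    simpa only [e] using h
  have hF : Integrable (fun s : ℝ => (1 + (s + a₀)^2) * Real.exp (-b * s^2)) := by
    have h0 := integrable_exp_neg_mul_sq hbpos
    have h1 := integrable_mul_exp_neg_mul_sq hbpos
    have := ((h0.const_mul (1 + a₀^2)).add (h1.const_mul (2*a₀))).add hsq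
    refine this.congr (Eventually.of_forall fun s => ?_)
    simp only [Pi.add_apply]
    ring
  have hshift : Integrable (fun t : ℝ => (1 + t^2) * Real.exp (-b * (t - a₀)^2)) := by
    have hm : AEStronglyMeasurable (fun s : ℝ => (1 + (s + a₀)^2) * Real.exp (-b * s^2))
        (volume : Measure ℝ) := by
      exact (Continuous.mul (by continuity) (by continuity)).aestronglyMeasurable
    have hcomp := ((measurePreserving_sub_right (volume : Measure ℝ) a₀).integrable_comp
      hm).mpr hF
    refine hcomp.congr (Eventually.of_forall fun t => ?_)
    simp [Function.comp, sub_add_cancel]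
  have hbound : Integrable (fun t : ℝ => (c * K) * ((1 + t^2) * Real.exp (-b * (t - a₀)^2))) :=
    hshift.const_mul _
  refine hbound.mono' ((hh.mul (siteWeight_continuous hU)).aestronglyMeasurable)
    (Eventually.of_forall fun t => ?_)
  have hW := siteWeight_le (a := a) hd hβ hA hA0 t
  rw [← ha₀, ← hK, ← hb, show (a₀ - t)^2 = (t - a₀)^2 by ring] at hW
  have hWpos := siteWeight_pos β d U a t
  have h1 : ‖h t * siteWeight β d U a t‖ = |h t| * siteWeight β d U a t := by
    rw [norm_mul, Real.norm_eq_abs, Real.norm_eq_abs, abs_of_pos hWpos]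
  rw [h1]
  have h2 : |h t| * siteWeight β d U a t ≤ (c * (1 + t^2)) * (K * Real.exp (-b * (t - a₀)^2)) := by
    apply mul_le_mul (hbd t) hW hWpos.le (by positivity)
  calc |h t| * siteWeight β d U a t
      ≤ (c * (1 + t^2)) * (K * Real.exp (-b * (t - a₀)^2)) := h2
    _ = (c * K) * ((1 + t^2) * Real.exp (-b * (t - a₀)^2)) := by ring

lemma integrable_siteWeight (hd : 1 ≤ d) (hβ : 0 < β) (hU : Continuous U) (hA : 0 < A)
    (hA0 : ∀ η : ℝ, A * η ^ 2 - B ≤ U η) :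
    Integrable (siteWeight β d U a) := by
  have := integrable_weight_mul (a := a) hd hβ hU hA hA0 (h := fun _ => (1:ℝ))
    continuous_const (c := 1) (fun t => by simp; nlinarith [sq_nonneg t])
  simpa using this

lemma Zsite_pos (hd : 1 ≤ d) (hβ : 0 < β) (hU : Continuous U) (hA : 0 < A)
    (hA0 : ∀ η : ℝ, A * η ^ 2 - B ≤ U η) : 0 < Zsite β d U a := by
  rw [Zsite, integral_pos_iff_support_of_nonneg (fun t => (siteWeight_pos β d U a t).le)
    (integrable_siteWeight hd hβ hU hA hA0)]
  have : Function.support (siteWeight β d U a) = Set.univ :=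
    Set.eq_univ_of_forall fun t => (siteWeight_pos β d U a t).ne'
  rw [this]
  simp

lemma nuSite_prob (hd : 1 ≤ d) (hβ : 0 < β) (hU : Continuous U) (hA : 0 < A)
    (hA0 : ∀ η : ℝ, A * η ^ 2 - B ≤ U η) : IsProbabilityMeasure (nuSite β d U a) := by
  have hZ := Zsite_pos (a := a) hd hβ hU hA hA0
  constructor
  rw [nuSite, withDensity_apply _ MeasurableSet.univ, setLIntegral_univ,
    ← ofReal_integral_eq_lintegral_ofReal
      (((integrable_siteWeight hd hβ hU hA hA0).div_const _))
      (Eventually.of_forall fun t => div_nonneg (siteWeight_pos β d U a t).le hZ.le)]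
  rw [integral_div, ← Zsite, div_self hZ.ne']
  simp

lemma integrable_nuSite (hd : 1 ≤ d) (hβ : 0 < β) (hU : Continuous U) (hA : 0 < A)
    (hA0 : ∀ η : ℝ, A * η ^ 2 - B ≤ U η) {h : ℝ → ℝ} (hh : Continuous h) {c : ℝ}
    (hbd : ∀ t, |h t| ≤ c * (1 + t^2)) :
    Integrable h (nuSite β d U a) := by
  have hZ := Zsite_pos (a := a) hd hβ hU hA hA0
  rw [nuSite, integrable_withDensity_iff
    (((siteWeight_continuous hU).div_const _).measurable.ennreal_ofReal)
    (Eventually.of_forall fun t => ENNReal.ofReal_lt_top)]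
  have hint := (integrable_weight_mul (a := a) hd hβ hU hA hA0 hh hbd).div_const
    (Zsite β d U a)
  refine hint.congr (Eventually.of_forall fun t => ?_)
  show h t * siteWeight β d U a t / Zsite β d U a
      = h t * (ENNReal.ofReal (siteWeight β d U a t / Zsite β d U a)).toReal
  rw [ENNReal.toReal_ofReal (div_nonneg (siteWeight_pos β d U a t).le hZ.le)]
  ring



lemma cov_repr (ν : Measure ℝ) [IsProbabilityMeasure ν] {f g : ℝ → ℝ}
    (hf : Integrable f ν) (hg : Integrable g ν)
    (hfg : Integrable (fun t => f t * g t) ν) :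
    Integrable (fun z : ℝ × ℝ => (f z.1 - f z.2) * (g z.1 - g z.2)) (ν.prod ν) ∧
    ∫ z, (f z.1 - f z.2) * (g z.1 - g z.2) ∂(ν.prod ν) = 2 * covM ν f g := by
  have h1 := hfg.mul_prod (integrable_const (1:ℝ) (μ := ν))
  have h2 := hf.mul_prod hg
  have h3 := hg.mul_prod hf
  have h4 := (integrable_const (1:ℝ) (μ := ν)).mul_prod hfg
  have key : (fun z : ℝ × ℝ => (f z.1 - f z.2) * (g z.1 - g z.2)) =
      fun z : ℝ × ℝ => (((f z.1 * g z.1) * (1:ℝ) - f z.1 * g z.2) - g z.1 * f z.2) +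
        (1:ℝ) * (f z.2 * g z.2) := by
    funext z; ring
  have h12 : Integrable (fun z : ℝ × ℝ => f z.1 * g z.1 * (1:ℝ) - f z.1 * g z.2) (ν.prod ν) :=
    h1.sub h2
  have h123 : Integrable
      (fun z : ℝ × ℝ => f z.1 * g z.1 * (1:ℝ) - f z.1 * g z.2 - g z.1 * f z.2) (ν.prod ν) :=
    h12.sub h3
  have hint : Integrable (fun z : ℝ × ℝ => (f z.1 - f z.2) * (g z.1 - g z.2)) (ν.prod ν) := by
    rw [key]; exact h123.add h4
  refine ⟨hint, ?_⟩
  rw [key, integral_add h123 h4, integral_sub h12 h3,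
    integral_sub h1 h2,
    integral_prod_mul (fun t => f t * g t) (fun _ => (1:ℝ)),
    integral_prod_mul f g, integral_prod_mul g f,
    integral_prod_mul (fun _ => (1:ℝ)) (fun t => f t * g t)]
  simp only [integral_const, measure_univ, probReal_univ, ENNReal.toReal_one, one_smul, smul_eq_mul]
  rw [covM]; ring

lemma pt_bounds {C₁ C₂ : ℝ} (hC₁ : 0 ≤ C₁) {f g : ℝ → ℝ}
    (hf : ∀ u v : ℝ, u ≤ v → C₁ * (v - u) ≤ f u - f v ∧ f u - f v ≤ C₂ * (v - u))
    (hg : ∀ u v : ℝ, u ≤ v → C₁ * (v - u) ≤ g u - g v ∧ g u - g v ≤ C₂ * (v - u))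
    (s t : ℝ) :
    C₁^2 * ((s - t) * (s - t)) ≤ (f s - f t) * (g s - g t) ∧
    (f s - f t) * (g s - g t) ≤ C₂^2 * ((s - t) * (s - t)) := by
  rcases le_total s t with h | h
  · obtain ⟨hf1, hf2⟩ := hf s t h
    obtain ⟨hg1, hg2⟩ := hg s t h
    have hδ : 0 ≤ t - s := by linarith
    have hfp : 0 ≤ f s - f t := le_trans (by positivity) hf1
    have hgp : 0 ≤ g s - g t := le_trans (by positivity) hg1
    have hlow := mul_le_mul hf1 hg1 (by positivity) hfp
    have hup := mul_le_mul hf2 hg2 hgp (le_trans hfp hf2)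
    constructor
    · nlinarith
    · nlinarith
  · obtain ⟨hf1, hf2⟩ := hf t s h
    obtain ⟨hg1, hg2⟩ := hg t s h
    have hδ : 0 ≤ s - t := by linarith
    have hfp : 0 ≤ f t - f s := le_trans (by positivity) hf1
    have hgp : 0 ≤ g t - g s := le_trans (by positivity) hg1
    have hlow := mul_le_mul hf1 hg1 (by positivity) hfp
    have hup := mul_le_mul hf2 hg2 hgp (le_trans hfp hf2)
    have hid : (f s - f t) * (g s - g t) = (f t - f s) * (g t - g s) := by ring
    constructor
    · nlinarith
    · nlinarith

lemma deriv_slope {V : ℝ → ℝ} {C₁ C₂ : ℝ} (hV : ContDiff ℝ 2 V)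
    (hV'' : ∀ s, C₁ ≤ deriv (deriv V) s ∧ deriv (deriv V) s ≤ C₂) :
    ∀ x y : ℝ, x ≤ y →
      C₁ * (y - x) ≤ deriv V y - deriv V x ∧ deriv V y - deriv V x ≤ C₂ * (y - x) := by
  have h2 : ContDiff ℝ ((1 + 1 : ℕ) : ℕ∞) V := by exact_mod_cast hV
  have h1 : ContDiff ℝ (1:ℕ) (deriv V) := by
    simpa using ContDiff.iterate_deriv' 1 1 h2
  have hdiff : Differentiable ℝ (deriv V) := h1.differentiable (by norm_num)
  intro x y hxy
  constructor
  · have hmono : Monotone (fun s => deriv V s - C₁ * s) := by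
      apply monotone_of_deriv_nonneg
      · exact hdiff.sub (differentiable_fun_id.const_mul C₁)
      · intro s
        rw [deriv_fun_sub (hdiff s) ((differentiable_fun_id.const_mul C₁) s)]
        have hd1 : deriv (fun s : ℝ => C₁ * s) s = C₁ := by
          simpa using deriv_const_mul_field (v := fun s : ℝ => s) (x := s) C₁
        rw [hd1]
        linarith [(hV'' s).1]
    have h' : deriv V x - C₁ * x ≤ deriv V y - C₁ * y := hmono hxy
    linarith
  · have hmono : Monotone (fun s => C₂ * s - deriv V s) := by
      apply monotone_of_deriv_nonneg
      · exact (differentiable_fun_id.const_mul C₂).sub hdiff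
      · intro s
        rw [deriv_fun_sub ((differentiable_fun_id.const_mul C₂) s) (hdiff s)]
        have hd2 : deriv (fun s : ℝ => C₂ * s) s = C₂ := by
          simpa using deriv_const_mul_field (v := fun s : ℝ => s) (x := s) C₂
        rw [hd2]
        linarith [(hV'' s).2]
    have h' : C₂ * x - deriv V x ≤ C₂ * y - deriv V y := hmono hxy
    linarith


end Aux


/-- **Statement 12** (bounds on the `V'-V'` covariance in terms of the variance). -/
theorem statement12
    {d : ℕ} {β A B C₀ C₁ C₂ : ℝ} {U V g : ℝ → ℝ}
    (hd : 1 ≤ d) (hβ : 0 < β)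
    -- (A0)
    (hUcont : Continuous U) (hA : 0 < A) (hA0 : ∀ η : ℝ, A * η ^ 2 - B ≤ U η)
    -- (A1)
    (hsum : ∀ s, U s = V s + g s)
    (hV : ContDiff ℝ 2 V) (hg : ContDiff ℝ 2 g)
    (hC₁ : 0 < C₁) (hC₁₂ : C₁ < C₂) (hC₂₀ : C₂ < C₀)
    (hV'' : ∀ s, C₁ ≤ deriv (deriv V) s ∧ deriv (deriv V) s ≤ C₂)
    (hg'' : ∀ s, -C₀ ≤ deriv (deriv g) s ∧ deriv (deriv g) s ≤ 0) :
    ∀ (a : Fin (2*d) → ℝ) (i j : Fin (2*d)),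
      C₁^2 * varId (nuSite β d U a)
          ≤ covM (nuSite β d U a)
              (fun t => deriv V (a i - t)) (fun t => deriv V (a j - t)) ∧
      covM (nuSite β d U a)
              (fun t => deriv V (a i - t)) (fun t => deriv V (a j - t))
          ≤ C₂^2 * varId (nuSite β d U a) := by

  intro a i j
  have hC₂pos : 0 < C₂ := lt_trans hC₁ hC₁₂
  have hprob : IsProbabilityMeasure (nuSite β d U a) :=
    Aux.nuSite_prob hd hβ hUcont hA hA0
  set ν := nuSite β d U a with hν
  haveI : IsProbabilityMeasure ν := hprob
  have hslope := Aux.deriv_slope hV hV''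
  set φ : ℝ → ℝ := fun t => deriv V (a i - t) with hφ
  set ψ : ℝ → ℝ := fun t => deriv V (a j - t) with hψ
  have hφprop : ∀ u v : ℝ, u ≤ v → C₁ * (v - u) ≤ φ u - φ v ∧ φ u - φ v ≤ C₂ * (v - u) := by
    intro u v huv
    have h := hslope (a i - v) (a i - u) (by linarith)
    rw [show a i - u - (a i - v) = v - u by ring] at h
    exact h
  have hψprop : ∀ u v : ℝ, u ≤ v → C₁ * (v - u) ≤ ψ u - ψ v ∧ ψ u - ψ v ≤ C₂ * (v - u) := by
    intro u v huv
    have h := hslope (a j - v) (a j - u) (by linarith)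
    rw [show a j - u - (a j - v) = v - u by ring] at h
    exact h
  -- linear growth of deriv V
  have hlip : ∀ x y : ℝ, |deriv V x - deriv V y| ≤ C₂ * |x - y| := by
    intro x y
    rcases le_total x y with h | h
    · have hs := hslope x y h
      have h1 : 0 ≤ deriv V y - deriv V x :=
        le_trans (mul_nonneg hC₁.le (by linarith)) hs.1
      rw [abs_sub_comm, abs_of_nonneg h1, abs_sub_comm x y,
        abs_of_nonneg (by linarith : (0:ℝ) ≤ y - x)]
      exact hs.2
    · have hs := hslope y x h
      have h1 : 0 ≤ deriv V x - deriv V y :=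
        le_trans (mul_nonneg hC₁.le (by linarith)) hs.1
      rw [abs_of_nonneg h1, abs_of_nonneg (by linarith : (0:ℝ) ≤ x - y)]
      exact hs.2
  have hVd0 : (0:ℝ) ≤ |deriv V 0| := abs_nonneg _
  have habs : ∀ t : ℝ, |t| ≤ 1 + t^2 := fun t => by
    nlinarith [sq_nonneg (|t| - 1), sq_abs t, abs_nonneg t]
  have hlin : ∀ (c : ℝ), ∀ t : ℝ, |deriv V (c - t)|
      ≤ (|deriv V 0| + C₂ * |c| + C₂) * (1 + |t|) := by
    intro c t
    have h1 : |deriv V (c - t) - deriv V 0| ≤ C₂ * |c - t| := by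
      simpa using hlip (c - t) 0
    have h2 : |deriv V (c - t)| ≤ |deriv V 0| + C₂ * |c - t| := by
      have := abs_add_le (deriv V (c - t) - deriv V 0) (deriv V 0)
      simp only [sub_add_cancel] at this
      linarith
    have h3 : |c - t| ≤ |c| + |t| := by
      rw [sub_eq_add_neg]
      exact (abs_add_le c (-t)).trans (by rw [abs_neg])
    have h4 : C₂ * |c - t| ≤ C₂ * (|c| + |t|) := mul_le_mul_of_nonneg_left h3 hC₂pos.le
    nlinarith [mul_nonneg hVd0 (abs_nonneg t),
      mul_nonneg (mul_nonneg hC₂pos.le (abs_nonneg c)) (abs_nonneg t),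
      mul_nonneg hC₂pos.le (abs_nonneg t)]
  set cφ : ℝ := |deriv V 0| + C₂ * |a i| + C₂ with hcφ
  set cψ : ℝ := |deriv V 0| + C₂ * |a j| + C₂ with hcψ
  have hcφ0 : 0 ≤ cφ := by rw [hcφ]; positivity
  have hcψ0 : 0 ≤ cψ := by rw [hcψ]; positivity
  have hφlin : ∀ t : ℝ, |φ t| ≤ cφ * (1 + |t|) := fun t => hlin (a i) t
  have hψlin : ∀ t : ℝ, |ψ t| ≤ cψ * (1 + |t|) := fun t => hlin (a j) t
  have hφbd : ∀ t : ℝ, |φ t| ≤ (2 * cφ) * (1 + t^2) := by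
    intro t
    have := hφlin t
    nlinarith [mul_le_mul_of_nonneg_left (habs t) hcφ0, mul_nonneg hcφ0 (sq_nonneg t)]
  have hψbd : ∀ t : ℝ, |ψ t| ≤ (2 * cψ) * (1 + t^2) := by
    intro t
    have := hψlin t
    nlinarith [mul_le_mul_of_nonneg_left (habs t) hcψ0, mul_nonneg hcψ0 (sq_nonneg t)]
  have hφψbd : ∀ t : ℝ, |φ t * ψ t| ≤ (2 * cφ * cψ) * (1 + t^2) := by
    intro t
    rw [abs_mul]
    have h1 : |φ t| * |ψ t| ≤ (cφ * (1 + |t|)) * (cψ * (1 + |t|)) :=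
      mul_le_mul (hφlin t) (hψlin t) (abs_nonneg _) (by positivity)
    have h2 : (cφ * (1 + |t|)) * (cψ * (1 + |t|)) ≤ (2 * cφ * cψ) * (1 + t^2) := by
      have h3 : (1 + |t|) * (1 + |t|) ≤ 2 * (1 + t^2) := by
        nlinarith [abs_mul_abs_self t, sq_nonneg (|t| - 1), sq_nonneg t]
      calc (cφ * (1 + |t|)) * (cψ * (1 + |t|)) = (cφ * cψ) * ((1 + |t|) * (1 + |t|)) := by ring
        _ ≤ (cφ * cψ) * (2 * (1 + t^2)) :=
            mul_le_mul_of_nonneg_left h3 (by positivity)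
        _ = (2 * cφ * cψ) * (1 + t^2) := by ring
    linarith
  have hVdcont : Continuous (deriv V) := hV.continuous_deriv one_le_two
  have hφcont : Continuous φ := hVdcont.comp (continuous_const.sub continuous_id)
  have hψcont : Continuous ψ := hVdcont.comp (continuous_const.sub continuous_id)
  have hφint : Integrable φ ν := Aux.integrable_nuSite hd hβ hUcont hA hA0 hφcont hφbd
  have hψint : Integrable ψ ν := Aux.integrable_nuSite hd hβ hUcont hA hA0 hψcont hψbd
  have hφψint : Integrable (fun t => φ t * ψ t) ν :=
    Aux.integrable_nuSite hd hβ hUcont hA hA0 (hφcont.mul hψcont) hφψbd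
  have hidbd : ∀ t : ℝ, |(fun t : ℝ => t) t| ≤ 1 * (1 + t^2) := fun t => by
    simpa using (habs t)
  have hid2bd : ∀ t : ℝ, |(fun t : ℝ => t * t) t| ≤ 1 * (1 + t^2) := fun t => by
    simp only [one_mul, abs_mul]
    nlinarith [abs_mul_abs_self t, sq_nonneg t]
  have hidint : Integrable (fun t : ℝ => t) ν :=
    Aux.integrable_nuSite hd hβ hUcont hA hA0 continuous_id hidbd
  have hid2int : Integrable (fun t : ℝ => t * t) ν :=
    Aux.integrable_nuSite hd hβ hUcont hA hA0 (continuous_id.mul continuous_id) hid2bd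
  obtain ⟨hJint0, hJeq0⟩ := Aux.cov_repr ν hidint hidint hid2int
  obtain ⟨hIint0, hIeq0⟩ := Aux.cov_repr ν hφint hψint hφψint
  have hJint : Integrable (fun z : ℝ × ℝ => (z.1 - z.2) * (z.1 - z.2)) (ν.prod ν) := hJint0
  have hJeq : ∫ z, (z.1 - z.2) * (z.1 - z.2) ∂(ν.prod ν) = 2 * varId ν := hJeq0
  have hIint : Integrable (fun z : ℝ × ℝ => (φ z.1 - φ z.2) * (ψ z.1 - ψ z.2)) (ν.prod ν) :=
    hIint0
  have hIeq : ∫ z, (φ z.1 - φ z.2) * (ψ z.1 - ψ z.2) ∂(ν.prod ν) = 2 * covM ν φ ψ := hIeq0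
  have hpt := Aux.pt_bounds hC₁.le hφprop hψprop
  have hlow : ∫ z, C₁^2 * ((z.1 - z.2) * (z.1 - z.2)) ∂(ν.prod ν)
      ≤ ∫ z, (φ z.1 - φ z.2) * (ψ z.1 - ψ z.2) ∂(ν.prod ν) :=
    integral_mono (hJint.const_mul _) hIint fun z => (hpt z.1 z.2).1
  have hupp : ∫ z, (φ z.1 - φ z.2) * (ψ z.1 - ψ z.2) ∂(ν.prod ν)
      ≤ ∫ z, C₂^2 * ((z.1 - z.2) * (z.1 - z.2)) ∂(ν.prod ν) :=
    integral_mono hIint (hJint.const_mul _) fun z => (hpt z.1 z.2).2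
  rw [integral_const_mul, hJeq, hIeq] at hlow
  rw [integral_const_mul, hJeq, hIeq] at hupp
  constructor
  · nlinarith [hlow]
  · nlinarith [hupp]

end
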